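/- Let a = cos(θ/2) and b = e^{−iφ} sin(θ/2), and consider F²(θ,φ) = 1 − p²[(|a|²−|b|²)² − ((b·conj(a))² + (a·conj(b))²) + 5|a|²|b|²] for a fixed p with 0 < p ≤ 1. Then min over (θ,φ) of F² equals 1 − (7/4)p², and the minimum is attained at θ = π/2, φ = π/2. -/

import Mathlib

open ComplexConjugate

/-- The order-`p²` fidelity of the encoded state `a|0_L⟩ + b|1_L⟩`
(with `a = cos(θ/2)`, `b = e^{-iφ} sin(θ/2)`) under 4-qubit noise and the
adaptive Petz recovery. -/
noncomputable def F2QEC (p θ φ : ℝ) : ℝ :=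
  let a : ℂ := (Real.cos (θ / 2) : ℂ)
  let b : ℂ := Complex.exp (-(Complex.I * φ)) * (Real.sin (θ / 2) : ℂ)
  1 - p ^ 2 * ((‖a‖ ^ 2 - ‖b‖ ^ 2) ^ 2
      - ((b * conj a) ^ 2 + (a * conj b) ^ 2).re
      + 5 * ‖a‖ ^ 2 * ‖b‖ ^ 2)

lemma exp_eq (φ : ℝ) : Complex.exp (-(Complex.I * φ)) =
    (Real.cos φ : ℂ) - (Real.sin φ : ℂ) * Complex.I := by
  rw [show -(Complex.I * (φ:ℂ)) = ((-φ : ℝ) : ℂ) * Complex.I by push_cast; ring,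
    Complex.exp_mul_I]
  rw [← Complex.ofReal_cos, ← Complex.ofReal_sin]
  push_cast [Real.cos_neg, Real.sin_neg]
  ring

lemma F2_eq (p θ φ : ℝ) : F2QEC p θ φ =
    1 - p ^ 2 * (1 + (1 - 2 * (Real.cos φ ^ 2 - Real.sin φ ^ 2)) *
      (Real.sin (θ/2) * Real.cos (θ/2)) ^ 2) := by
  have h1 := Real.sin_sq_add_cos_sq (θ/2)
  have h2 := Real.sin_sq_add_cos_sq φ
  simp only [F2QEC, exp_eq]
  set c := Real.cos (θ/2)
  set s := Real.sin (θ/2)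
  set u := Real.cos φ
  set v := Real.sin φ
  simp only [Complex.sq_norm]
  simp only [pow_two, Complex.normSq_apply, map_sub, map_mul,
    Complex.conj_ofReal, Complex.conj_I, Complex.sub_re, Complex.sub_im, Complex.add_re,
    Complex.add_im, Complex.mul_re, Complex.mul_im, Complex.neg_re, Complex.neg_im,
    Complex.I_re, Complex.I_im, Complex.ofReal_re, Complex.ofReal_im]
  ring_nf
  linear_combination (-(p^2) * (c^2+s^2+1)) * h1 + (-(p^2) * (3*c^2*s^2 + s^4*(u^2+v^2+1))) * h2

theorem adaptive_QEC_worst_case_fidelity (p : ℝ) (hp0 : 0 < p) (hp1 : p ≤ 1) :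
    (∀ θ φ : ℝ, F2QEC p (Real.pi / 2) (Real.pi / 2) ≤ F2QEC p θ φ) ∧
    F2QEC p (Real.pi / 2) (Real.pi / 2) = 1 - (7 / 4) * p ^ 2 := by
  have hs2 : Real.sqrt 2 ^ 2 = 2 := Real.sq_sqrt (by norm_num)
  have hval : F2QEC p (Real.pi / 2) (Real.pi / 2) = 1 - (7 / 4) * p ^ 2 := by
    rw [F2_eq]
    rw [show Real.pi / 2 / 2 = Real.pi / 4 by ring]
    rw [Real.sin_pi_div_four, Real.cos_pi_div_four, Real.cos_pi_div_two, Real.sin_pi_div_two]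
    have h : Real.sqrt 2 / 2 * (Real.sqrt 2 / 2) = 1/2 := by linear_combination hs2 / 4
    rw [h]; ring
  refine ⟨fun θ φ => ?_, hval⟩
  rw [hval, F2_eq]
  have h1 := Real.sin_sq_add_cos_sq (θ/2)
  have h2 := Real.sin_sq_add_cos_sq φ
  set c := Real.cos (θ/2)
  set s := Real.sin (θ/2)
  set u := Real.cos φ
  set v := Real.sin φ
  have hg : (1 - 2 * (u ^ 2 - v ^ 2)) * (s * c) ^ 2 ≤ 3 / 4 := by
    nlinarith [sq_nonneg (s*c), sq_nonneg (s^2 - c^2), sq_nonneg u, sq_nonneg v,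
      sq_nonneg (u * (s*c)), sq_nonneg (v * (s*c))]
  nlinarith [mul_nonneg (sq_nonneg p) (by linarith : (0:ℝ) ≤ 3/4 - (1 - 2*(u^2-v^2))*(s*c)^2)]
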